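/- (Triple bubble with density |x|.) Let 0 < M₁ ≤ M₂ ≤ M₃. Every configuration of 3 regions on ℝ with density |x| whose regions have weighted masses M₁, M₂, M₃ has total weighted perimeter at least √(2M₂) + √(2M₁) + √(2(M₁+M₃)). Moreover, the configuration consisting of the intervals [−√(2M₂), 0] (region of mass M₂), [0, √(2M₁)] (region of mass M₁), and [√(2M₁), √(2(M₁+M₃))] (region of mass M₃) has exactly these weighted masses and total weighted perimeter exactly √(2M₂) + √(2M₁) + √(2(M₁+M₃)). -/

import Mathlib

open MeasureTheory Finset

/-- A configuration of `n` regions made of `k` nondegenerate closed intervals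
with pairwise disjoint interiors, each interval labeled by one of the regions. -/
structure Config (n k : ℕ) where
  lo : Fin k → ℝ
  hi : Fin k → ℝ
  lab : Fin k → Fin n
  nondeg : ∀ j, lo j < hi j
  disj : ∀ i j, i ≠ j → Set.Ioo (lo i) (hi i) ∩ Set.Ioo (lo j) (hi j) = ∅

namespace Config

variable {n k : ℕ}

/-- Weighted mass of region `i` with respect to the density `|x|`. -/
noncomputable def mass (C : Config n k) (i : Fin n) : ℝ :=
  ∑ j ∈ univ.filter (fun j => C.lab j = i), ∫ x in C.lo j..C.hi j, |x|

/-- The (finite) set of all endpoints of intervals of the configuration. -/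
noncomputable def endpointSet (C : Config n k) : Finset ℝ :=
  image C.lo univ ∪ image C.hi univ

/-- Total weighted perimeter with respect to the density `|x|`. -/
noncomputable def perim (C : Config n k) : ℝ :=
  ∑ x ∈ C.endpointSet, |x|

/-- A configuration is condensed if the union of its intervals is a closed interval
containing `0` and each region has at most one interval contained in `(-∞,0]`
and at most one interval contained in `[0,∞)`. -/
def Condensed (C : Config n k) : Prop :=
  (∃ a b : ℝ, a ≤ 0 ∧ 0 ≤ b ∧ (⋃ j, Set.Icc (C.lo j) (C.hi j)) = Set.Icc a b) ∧
  ∀ i : Fin n,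
    (univ.filter (fun j => C.lab j = i ∧ C.hi j ≤ 0)).card ≤ 1 ∧
    (univ.filter (fun j => C.lab j = i ∧ 0 ≤ C.lo j)).card ≤ 1

/-- A configuration is isoperimetric if its total weighted perimeter is least among all
configurations of `n` regions with the same list of weighted masses. -/
def Isoperimetric (C : Config n k) : Prop :=
  ∀ (k' : ℕ) (C' : Config n k'), (∀ i, C'.mass i = C.mass i) → C.perim ≤ C'.perim

end Config

section TripleBubbleAux
noncomputable def sq2 (x : ℝ) : ℝ := Real.sqrt (2 * x)

lemma sq2_nonneg (x : ℝ) : 0 ≤ sq2 x := Real.sqrt_nonneg _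
lemma sq2_zero : sq2 0 = 0 := by simp [sq2]
lemma sq2_mono {x y : ℝ} (h : x ≤ y) : sq2 x ≤ sq2 y :=
  Real.sqrt_le_sqrt (by linarith)
lemma sq2_sq {x : ℝ} (h : 0 ≤ x) : (sq2 x)^2 = 2*x := Real.sq_sqrt (by linarith)

lemma sF1 {x y : ℝ} (hx : 0 ≤ x) (hy : 0 ≤ y) : sq2 (x+y) ≤ sq2 x + sq2 y := by
  have h1 : sq2 (x+y) ≤ Real.sqrt ((sq2 x + sq2 y)^2) := by
    apply Real.sqrt_le_sqrt
    have := sq2_sq hx; have := sq2_sq hy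
    nlinarith [sq2_nonneg x, sq2_nonneg y, mul_nonneg (sq2_nonneg x) (sq2_nonneg y)]
  rwa [Real.sqrt_sq (add_nonneg (sq2_nonneg x) (sq2_nonneg y))] at h1

lemma sF3 {x y z : ℝ} (hx : 0 ≤ x) (hxy : x ≤ y) (hz : 0 ≤ z) :
    sq2 (y+z) + sq2 x ≤ sq2 (x+z) + sq2 y := by
  have hA := sq2_sq hx
  have hB := sq2_sq (show (0:ℝ) ≤ x + z by linarith)
  have hC := sq2_sq (show (0:ℝ) ≤ y by linarith)
  have hD := sq2_sq (show (0:ℝ) ≤ y + z by linarith)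
  have h1 : sq2 x ≤ sq2 y := sq2_mono hxy
  have h2 : sq2 (x+z) ≤ sq2 (y+z) := sq2_mono (by linarith)
  have h3 : sq2 x ≤ sq2 (x+z) := sq2_mono (by linarith)
  have h4 : sq2 y ≤ sq2 (y+z) := sq2_mono (by linarith)
  nlinarith [sq2_nonneg x, sq2_nonneg (x+z), sq2_nonneg y, sq2_nonneg (y+z),
    mul_nonneg (sub_nonneg.2 h3) (sub_nonneg.2 h2),
    mul_nonneg (sub_nonneg.2 h1) (sub_nonneg.2 h2),
    mul_nonneg (sub_nonneg.2 h4) (sub_nonneg.2 h3)]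

lemma scomb {t X Y : ℝ} (A : ℝ) (ht0 : 0 ≤ t) (ht1 : t ≤ 1)
    (hX : 0 ≤ X) (hY : 0 ≤ Y) (hA : A = (1-t)*X + t*Y) :
    (1-t) * sq2 X + t * sq2 Y ≤ sq2 A := by
  have hnn : 0 ≤ (1-t) * sq2 X + t * sq2 Y :=
    add_nonneg (mul_nonneg (by linarith) (sq2_nonneg X)) (mul_nonneg ht0 (sq2_nonneg Y))
  have h1 : Real.sqrt (((1-t) * sq2 X + t * sq2 Y)^2) ≤ sq2 A := by
    apply Real.sqrt_le_sqrt
    have := sq2_sq hX; have := sq2_sq hY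
    nlinarith [sq_nonneg (sq2 X - sq2 Y), mul_nonneg ht0 (sub_nonneg.2 ht1),
      mul_nonneg (mul_nonneg ht0 (sub_nonneg.2 ht1)) (sq_nonneg (sq2 X - sq2 Y))]
  calc (1-t) * sq2 X + t * sq2 Y = Real.sqrt (((1-t) * sq2 X + t * sq2 Y)^2) := by
        rw [Real.sqrt_sq hnn]
    _ ≤ sq2 A := h1

/-- endpoint principle on a segment for "concave-type" g -/
lemma seg {T m x : ℝ} (g : ℝ → ℝ) (hx : 0 ≤ x) (hxm : x ≤ m)
    (hcc : ∀ t, 0 ≤ t → t ≤ 1 → (1-t) * g 0 + t * g m ≤ g (t*m))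
    (h0 : T ≤ g 0) (h1 : T ≤ g m) : T ≤ g x := by
  rcases eq_or_lt_of_le (le_trans hx hxm) with hm | hm
  · have : x = 0 := le_antisymm (by rw [hm]; exact hxm) hx
    rw [this]; exact h0
  · have ht0 : 0 ≤ x/m := div_nonneg hx (le_of_lt hm)
    have ht1 : x/m ≤ 1 := (div_le_one hm).2 hxm
    have := hcc (x/m) ht0 ht1
    rw [div_mul_cancel₀ _ (ne_of_gt hm)] at this
    nlinarith [this]
lemma mixed (mα mβ mγ x y z T : ℝ)
    (hmα : 0 ≤ mα) (hmβ : 0 ≤ mβ) (hmγ : 0 ≤ mγ)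
    (hx : 0 ≤ x) (hxm : x ≤ mα) (hy : 0 ≤ y) (hym : y ≤ mβ)
    (hz : 0 ≤ z) (hzm : z ≤ mγ)
    (V1 : T ≤ sq2 mβ + sq2 (mα+mγ) + sq2 mβ + sq2 mα + sq2 mγ)
    (V2 : T ≤ sq2 (mβ+mγ) + sq2 mα + sq2 mβ + sq2 mγ + sq2 mα)
    (V3 : T ≤ sq2 (mα+mβ+mγ) + sq2 mα + sq2 mγ)
    (V4 : T ≤ sq2 mγ + sq2 (mα+mβ) + sq2 mγ + sq2 mα)
    (V5 : T ≤ sq2 (mα+mβ) + sq2 mγ + sq2 mβ + sq2 mγ)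
    (V6 : T ≤ sq2 (mα+mβ+mγ) + sq2 mβ + sq2 mγ)
    (V7 : T ≤ sq2 mα + sq2 (mβ+mγ) + sq2 mγ)
    (V8 : T ≤ sq2 (mα+mγ) + sq2 mβ + sq2 mγ) :
    T ≤ sq2 (x + (mβ - y) + z) + sq2 ((mα - x) + y + (mγ - z)) + sq2 (mβ - y)
      + sq2 z + sq2 (mα - x) + sq2 (mγ - z) := by
  refine seg (g := fun w => sq2 (w + (mβ - y) + z) + sq2 ((mα - w) + y + (mγ - z))
      + sq2 (mβ - y) + sq2 z + sq2 (mα - w) + sq2 (mγ - z)) hx hxm ?_ ?_ ?_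
  · intro t ht0 ht1
    beta_reduce
    have c1 := scomb (X := 0 + (mβ - y) + z) (Y := mα + (mβ - y) + z)
      (t*mα + (mβ - y) + z) ht0 ht1 (by linarith) (by linarith) (by ring)
    have c2 := scomb (X := (mα - 0) + y + (mγ - z)) (Y := (mα - mα) + y + (mγ - z))
      ((mα - t*mα) + y + (mγ - z)) ht0 ht1 (by linarith) (by linarith) (by ring)
    have c5 := scomb (X := mα - 0) (Y := mα - mα)
      (mα - t*mα) ht0 ht1 (by linarith) (by linarith) (by ring)
    linarith
  · -- x = 0
    beta_reduce
    refine seg (g := fun w => sq2 (0 + (mβ - w) + z) + sq2 ((mα - 0) + w + (mγ - z))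
      + sq2 (mβ - w) + sq2 z + sq2 (mα - 0) + sq2 (mγ - z)) hy hym ?_ ?_ ?_
    · intro t ht0 ht1
      beta_reduce
      have c1 := scomb (X := 0 + (mβ - 0) + z) (Y := 0 + (mβ - mβ) + z)
        (0 + (mβ - t*mβ) + z) ht0 ht1 (by linarith) (by linarith) (by ring)
      have c2 := scomb (X := (mα - 0) + 0 + (mγ - z)) (Y := (mα - 0) + mβ + (mγ - z))
        ((mα - 0) + t*mβ + (mγ - z)) ht0 ht1 (by linarith) (by linarith) (by ring)
      have c3 := scomb (X := mβ - 0) (Y := mβ - mβ)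
        (mβ - t*mβ) ht0 ht1 (by linarith) (by linarith) (by ring)
      linarith
    · -- x=0, y=0
      beta_reduce
      refine seg (g := fun w => sq2 (0 + (mβ - 0) + w) + sq2 ((mα - 0) + 0 + (mγ - w))
        + sq2 (mβ - 0) + sq2 w + sq2 (mα - 0) + sq2 (mγ - w)) hz hzm ?_ ?_ ?_
      · intro t ht0 ht1
        beta_reduce
        have c1 := scomb (X := 0 + (mβ - 0) + 0) (Y := 0 + (mβ - 0) + mγ)
          (0 + (mβ - 0) + t*mγ) ht0 ht1 (by linarith) (by linarith) (by ring)
        have c2 := scomb (X := (mα - 0) + 0 + (mγ - 0)) (Y := (mα - 0) + 0 + (mγ - mγ))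
          ((mα - 0) + 0 + (mγ - t*mγ)) ht0 ht1 (by linarith) (by linarith) (by ring)
        have c4 := scomb (X := (0:ℝ)) (Y := mγ)
          (t*mγ) ht0 ht1 (by linarith) (by linarith) (by ring)
        have c6 := scomb (X := mγ - 0) (Y := mγ - mγ)
          (mγ - t*mγ) ht0 ht1 (by linarith) (by linarith) (by ring)
        linarith
      · simp only [add_zero, zero_add, sub_zero, sub_self, sq2_zero]; linarith [V1]
      · simp only [add_zero, zero_add, sub_zero, sub_self, sq2_zero]; linarith [V2]
    · -- x=0, y=mβ
      beta_reduce
      refine seg (g := fun w => sq2 (0 + (mβ - mβ) + w) + sq2 ((mα - 0) + mβ + (mγ - w))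
        + sq2 (mβ - mβ) + sq2 w + sq2 (mα - 0) + sq2 (mγ - w)) hz hzm ?_ ?_ ?_
      · intro t ht0 ht1
        beta_reduce
        have c1 := scomb (X := 0 + (mβ - mβ) + 0) (Y := 0 + (mβ - mβ) + mγ)
          (0 + (mβ - mβ) + t*mγ) ht0 ht1 (by linarith) (by linarith) (by ring)
        have c2 := scomb (X := (mα - 0) + mβ + (mγ - 0)) (Y := (mα - 0) + mβ + (mγ - mγ))
          ((mα - 0) + mβ + (mγ - t*mγ)) ht0 ht1 (by linarith) (by linarith) (by ring)
        have c4 := scomb (X := (0:ℝ)) (Y := mγ)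
          (t*mγ) ht0 ht1 (by linarith) (by linarith) (by ring)
        have c6 := scomb (X := mγ - 0) (Y := mγ - mγ)
          (mγ - t*mγ) ht0 ht1 (by linarith) (by linarith) (by ring)
        linarith
      · simp only [add_zero, zero_add, sub_zero, sub_self, sq2_zero]; linarith [V3]
      · simp only [add_zero, zero_add, sub_zero, sub_self, sq2_zero]; linarith [V4]
  · -- x = mα
    beta_reduce
    refine seg (g := fun w => sq2 (mα + (mβ - w) + z) + sq2 ((mα - mα) + w + (mγ - z))
      + sq2 (mβ - w) + sq2 z + sq2 (mα - mα) + sq2 (mγ - z)) hy hym ?_ ?_ ?_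
    · intro t ht0 ht1
      beta_reduce
      have c1 := scomb (X := mα + (mβ - 0) + z) (Y := mα + (mβ - mβ) + z)
        (mα + (mβ - t*mβ) + z) ht0 ht1 (by linarith) (by linarith) (by ring)
      have c2 := scomb (X := (mα - mα) + 0 + (mγ - z)) (Y := (mα - mα) + mβ + (mγ - z))
        ((mα - mα) + t*mβ + (mγ - z)) ht0 ht1 (by linarith) (by linarith) (by ring)
      have c3 := scomb (X := mβ - 0) (Y := mβ - mβ)
        (mβ - t*mβ) ht0 ht1 (by linarith) (by linarith) (by ring)
      linarith
    · -- x=mα, y=0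
      beta_reduce
      refine seg (g := fun w => sq2 (mα + (mβ - 0) + w) + sq2 ((mα - mα) + 0 + (mγ - w))
        + sq2 (mβ - 0) + sq2 w + sq2 (mα - mα) + sq2 (mγ - w)) hz hzm ?_ ?_ ?_
      · intro t ht0 ht1
        beta_reduce
        have c1 := scomb (X := mα + (mβ - 0) + 0) (Y := mα + (mβ - 0) + mγ)
          (mα + (mβ - 0) + t*mγ) ht0 ht1 (by linarith) (by linarith) (by ring)
        have c2 := scomb (X := (mα - mα) + 0 + (mγ - 0)) (Y := (mα - mα) + 0 + (mγ - mγ))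
          ((mα - mα) + 0 + (mγ - t*mγ)) ht0 ht1 (by linarith) (by linarith) (by ring)
        have c4 := scomb (X := (0:ℝ)) (Y := mγ)
          (t*mγ) ht0 ht1 (by linarith) (by linarith) (by ring)
        have c6 := scomb (X := mγ - 0) (Y := mγ - mγ)
          (mγ - t*mγ) ht0 ht1 (by linarith) (by linarith) (by ring)
        linarith
      · simp only [add_zero, zero_add, sub_zero, sub_self, sq2_zero]; linarith [V5]
      · simp only [add_zero, zero_add, sub_zero, sub_self, sq2_zero]; linarith [V6]
    · -- x=mα, y=mβ
      beta_reduce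
      refine seg (g := fun w => sq2 (mα + (mβ - mβ) + w) + sq2 ((mα - mα) + mβ + (mγ - w))
        + sq2 (mβ - mβ) + sq2 w + sq2 (mα - mα) + sq2 (mγ - w)) hz hzm ?_ ?_ ?_
      · intro t ht0 ht1
        beta_reduce
        have c1 := scomb (X := mα + (mβ - mβ) + 0) (Y := mα + (mβ - mβ) + mγ)
          (mα + (mβ - mβ) + t*mγ) ht0 ht1 (by linarith) (by linarith) (by ring)
        have c2 := scomb (X := (mα - mα) + mβ + (mγ - 0)) (Y := (mα - mα) + mβ + (mγ - mγ))
          ((mα - mα) + mβ + (mγ - t*mγ)) ht0 ht1 (by linarith) (by linarith) (by ring)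
        have c4 := scomb (X := (0:ℝ)) (Y := mγ)
          (t*mγ) ht0 ht1 (by linarith) (by linarith) (by ring)
        have c6 := scomb (X := mγ - 0) (Y := mγ - mγ)
          (mγ - t*mγ) ht0 ht1 (by linarith) (by linarith) (by ring)
        linarith
      · simp only [add_zero, zero_add, sub_zero, sub_self, sq2_zero]; linarith [V7]
      · simp only [add_zero, zero_add, sub_zero, sub_self, sq2_zero]; linarith [V8]

lemma mixedA (a b c x y z : ℝ) (ha : 0 ≤ a) (hab : a ≤ b) (hbc : b ≤ c)
    (hx : 0 ≤ x) (hxm : x ≤ a) (hy : 0 ≤ y) (hym : y ≤ b) (hz : 0 ≤ z) (hzm : z ≤ c) :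
    sq2 a + sq2 b + sq2 (a+c) ≤ sq2 (x + (b - y) + z) + sq2 ((a - x) + y + (c - z))
      + sq2 (b - y) + sq2 z + sq2 (a - x) + sq2 (c - z) := by
  have hb : (0:ℝ) ≤ b := le_trans ha hab
  have hc : (0:ℝ) ≤ c := le_trans hb hbc
  refine mixed a b c x y z _ ha hb hc hx hxm hy hym hz hzm ?_ ?_ ?_ ?_ ?_ ?_ ?_ ?_
  · linarith [sq2_nonneg b, sq2_nonneg c]
  · have h1 : sq2 (a+c) ≤ sq2 (b+c) := sq2_mono (by linarith)
    linarith [sq2_nonneg c, sq2_nonneg a]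
  · have h1 : sq2 (a+c) ≤ sq2 (a+b+c) := sq2_mono (by linarith)
    have h2 : sq2 b ≤ sq2 c := sq2_mono hbc
    linarith
  · have h1 : sq2 b ≤ sq2 (a+b) := sq2_mono (by linarith)
    have h2 : sq2 (a+c) ≤ sq2 (c+c) := sq2_mono (by linarith)
    have h3 : sq2 (c+c) ≤ sq2 c + sq2 c := sF1 hc hc
    linarith
  · have h1 : sq2 a ≤ sq2 c := sq2_mono (by linarith)
    have h2 : sq2 (a+c) ≤ sq2 ((a+b)+c) := sq2_mono (by linarith)
    have h3 : sq2 ((a+b)+c) ≤ sq2 (a+b) + sq2 c := sF1 (by linarith) hc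
    linarith
  · have h1 : sq2 (a+c) ≤ sq2 (a+b+c) := sq2_mono (by linarith)
    have h2 : sq2 a ≤ sq2 c := sq2_mono (by linarith)
    linarith
  · have h1 := sF3 (x := b) (y := c) (z := c) hb hbc hc
    have h2 : sq2 (a+c) ≤ sq2 (c+c) := sq2_mono (by linarith)
    linarith
  · have h1 : sq2 a ≤ sq2 c := sq2_mono (by linarith)
    linarith

lemma mixedB (a b c x y z : ℝ) (ha : 0 ≤ a) (hab : a ≤ b) (hbc : b ≤ c)
    (hx : 0 ≤ x) (hxm : x ≤ a) (hy : 0 ≤ y) (hym : y ≤ c) (hz : 0 ≤ z) (hzm : z ≤ b) :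
    sq2 a + sq2 b + sq2 (a+c) ≤ sq2 (x + (c - y) + z) + sq2 ((a - x) + y + (b - z))
      + sq2 (c - y) + sq2 z + sq2 (a - x) + sq2 (b - z) := by
  have hb : (0:ℝ) ≤ b := le_trans ha hab
  have hc : (0:ℝ) ≤ c := le_trans hb hbc
  refine mixed a c b x y z _ ha hc hb hx hxm hy hym hz hzm ?_ ?_ ?_ ?_ ?_ ?_ ?_ ?_
  · -- sq2 c + sq2 (a+b) + sq2 c + sq2 a + sq2 b
    have h2 : sq2 (a+c) ≤ sq2 (c+c) := sq2_mono (by linarith)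
    have h3 : sq2 (c+c) ≤ sq2 c + sq2 c := sF1 hc hc
    linarith [sq2_nonneg (a+b)]
  · -- sq2 (c+b) + sq2 a + sq2 c + sq2 b + sq2 a
    have h1 : sq2 (a+c) ≤ sq2 (c+b) := sq2_mono (by linarith)
    linarith [sq2_nonneg c, sq2_nonneg a]
  · -- sq2 (a+c+b) + sq2 a + sq2 b
    have h1 : sq2 (a+c) ≤ sq2 (a+c+b) := sq2_mono (by linarith)
    linarith
  · -- sq2 b + sq2 (a+c) + sq2 b + sq2 a
    linarith [sq2_nonneg b]
  · -- sq2 (a+c) + sq2 b + sq2 c + sq2 b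
    have h1 : sq2 a ≤ sq2 c := sq2_mono (by linarith)
    linarith [sq2_nonneg b]
  · -- sq2 (a+c+b) + sq2 c + sq2 b
    have h1 : sq2 (a+c) ≤ sq2 (a+c+b) := sq2_mono (by linarith)
    have h2 : sq2 a ≤ sq2 c := sq2_mono (by linarith)
    linarith
  · -- sq2 a + sq2 (c+b) + sq2 b
    have h1 : sq2 (a+c) ≤ sq2 (c+b) := sq2_mono (by linarith)
    linarith
  · -- sq2 (a+b) + sq2 c + sq2 b
    have h1 := sF3 (x := a) (y := c) (z := a) ha (by linarith) ha
    rw [add_comm c a] at h1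
    have h2 : sq2 (a+a) ≤ sq2 (a+b) := sq2_mono (by linarith)
    linarith

lemma mixedC (a b c x y z : ℝ) (ha : 0 ≤ a) (hab : a ≤ b) (hbc : b ≤ c)
    (hx : 0 ≤ x) (hxm : x ≤ b) (hy : 0 ≤ y) (hym : y ≤ c) (hz : 0 ≤ z) (hzm : z ≤ a) :
    sq2 a + sq2 b + sq2 (a+c) ≤ sq2 (x + (c - y) + z) + sq2 ((b - x) + y + (a - z))
      + sq2 (c - y) + sq2 z + sq2 (b - x) + sq2 (a - z) := by
  have hb : (0:ℝ) ≤ b := le_trans ha hab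
  have hc : (0:ℝ) ≤ c := le_trans hb hbc
  refine mixed b c a x y z _ hb hc ha hx hxm hy hym hz hzm ?_ ?_ ?_ ?_ ?_ ?_ ?_ ?_
  · -- sq2 c + sq2 (b+a) + sq2 c + sq2 b + sq2 a
    have h2 : sq2 (a+c) ≤ sq2 (c+c) := sq2_mono (by linarith)
    have h3 : sq2 (c+c) ≤ sq2 c + sq2 c := sF1 hc hc
    linarith [sq2_nonneg (b+a)]
  · -- sq2 (c+a) + sq2 b + sq2 c + sq2 a + sq2 b
    have h1 : sq2 (a+c) ≤ sq2 (c+a) := sq2_mono (by linarith)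
    linarith [sq2_nonneg c, sq2_nonneg b]
  · -- sq2 (b+c+a) + sq2 b + sq2 a
    have h1 : sq2 (a+c) ≤ sq2 (b+c+a) := sq2_mono (by linarith)
    linarith
  · -- sq2 a + sq2 (b+c) + sq2 a + sq2 b
    have h1 : sq2 (a+c) ≤ sq2 (b+c) := sq2_mono (by linarith)
    linarith [sq2_nonneg a]
  · -- sq2 (b+c) + sq2 a + sq2 c + sq2 a
    have h1 : sq2 (a+c) ≤ sq2 (b+c) := sq2_mono (by linarith)
    have h2 : sq2 b ≤ sq2 c := sq2_mono hbc
    linarith [sq2_nonneg a]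
  · -- sq2 (b+c+a) + sq2 c + sq2 a
    have h1 : sq2 (a+c) ≤ sq2 (b+c+a) := sq2_mono (by linarith)
    have h2 : sq2 b ≤ sq2 c := sq2_mono hbc
    linarith
  · -- sq2 b + sq2 (c+a) + sq2 a
    have h1 : sq2 (a+c) ≤ sq2 (c+a) := sq2_mono (by linarith)
    linarith
  · -- sq2 (b+a) + sq2 c + sq2 a
    have h1 := sF3 (x := b) (y := c) (z := a) hb hbc ha
    rw [add_comm c a] at h1
    linarith

lemma max3_cases (p q r : ℝ) : max p (max q r) = p ∨ max p (max q r) = q ∨ max p (max q r) = r := by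
  rcases max_choice p (max q r) with h | h
  · left; exact h
  · rcases max_choice q r with h1 | h1
    · right; left; rw [h, h1]
    · right; right; rw [h, h1]

lemma base_sorted (a b c ua ub uc va vb vc : ℝ)
    (ha : 0 ≤ a) (hab : a ≤ b) (hbc : b ≤ c)
    (hua : 0 ≤ ua) (hub : 0 ≤ ub) (huc : 0 ≤ uc)
    (hva : 0 ≤ va) (hvb : 0 ≤ vb) (hvc : 0 ≤ vc)
    (hsa : ua + va = a) (hsb : ub + vb = b) (hsc : uc + vc = c) :
    sq2 a + sq2 b + sq2 (a+c) ≤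
      sq2 (va+vb+vc) + (sq2 va + sq2 vb + sq2 vc - max (sq2 va) (max (sq2 vb) (sq2 vc)))
      + (sq2 (ua+ub+uc) + (sq2 ua + sq2 ub + sq2 uc - max (sq2 ua) (max (sq2 ub) (sq2 uc)))) := by
  have hb : (0:ℝ) ≤ b := le_trans ha hab
  have hc : (0:ℝ) ≤ c := le_trans hb hbc
  -- helpers for diagonal cases
  have hM : sq2 (a+c) ≤ sq2 (va+vb+vc) + sq2 (ua+ub+uc) := by
    have h1 : sq2 (a+c) ≤ sq2 ((va+vb+vc)+(ua+ub+uc)) := sq2_mono (by linarith)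
    have h2 := sF1 (x := va+vb+vc) (y := ua+ub+uc) (by linarith) (by linarith)
    linarith
  have hpa : sq2 a ≤ sq2 va + sq2 ua := by
    have := sF1 (x := va) (y := ua) hva hua
    rw [show va + ua = a by linarith] at this; linarith
  have hpb : sq2 b ≤ sq2 vb + sq2 ub := by
    have := sF1 (x := vb) (y := ub) hvb hub
    rw [show vb + ub = b by linarith] at this; linarith
  have hpc : sq2 c ≤ sq2 vc + sq2 uc := by
    have := sF1 (x := vc) (y := uc) hvc huc
    rw [show vc + uc = c by linarith] at this; linarith
  have hab' : sq2 a ≤ sq2 b := sq2_mono hab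
  have hbc' : sq2 b ≤ sq2 c := sq2_mono hbc
  have hac' : sq2 a ≤ sq2 c := sq2_mono (by linarith)
  rcases max3_cases (sq2 va) (sq2 vb) (sq2 vc) with hv | hv | hv <;>
    rcases max3_cases (sq2 ua) (sq2 ub) (sq2 uc) with hu | hu | hu <;> rw [hv, hu]
  · -- diag a
    linarith
  · -- (va, ub) : assignment A
    have h := mixedA a b c va ub vc ha hab hbc hva (by linarith) hub (by linarith) hvc (by linarith)
    rw [show b - ub = vb by linarith, show a - va = ua by linarith,
        show c - vc = uc by linarith] at h
    linarith
  · -- (va, uc) : assignment B, x=va y=uc z=vb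
    have h := mixedB a b c va uc vb ha hab hbc hva (by linarith) huc (by linarith) hvb (by linarith)
    rw [show c - uc = vc by linarith, show a - va = ua by linarith,
        show b - vb = ub by linarith] at h
    rw [show va + vc + vb = va + vb + vc by ring, show ua + uc + ub = ua + ub + uc by ring] at h
    linarith
  · -- (vb, ua) : assignment A swapped, x=ua y=vb z=uc
    have h := mixedA a b c ua vb uc ha hab hbc hua (by linarith) hvb (by linarith) huc (by linarith)
    rw [show b - vb = ub by linarith, show a - ua = va by linarith,
        show c - uc = vc by linarith] at h
    linarith
  · -- diag b
    linarith
  · -- (vb, uc) : assignment C, x=vb y=uc z=va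
    have h := mixedC a b c vb uc va ha hab hbc hvb (by linarith) huc (by linarith) hva (by linarith)
    rw [show c - uc = vc by linarith, show b - vb = ub by linarith,
        show a - va = ua by linarith] at h
    rw [show vb + vc + va = va + vb + vc by ring, show ub + uc + ua = ua + ub + uc by ring] at h
    linarith
  · -- (vc, ua) : assignment B swapped, x=ua y=vc z=ub
    have h := mixedB a b c ua vc ub ha hab hbc hua (by linarith) hvc (by linarith) hub (by linarith)
    rw [show c - vc = uc by linarith, show a - ua = va by linarith,
        show b - ub = vb by linarith] at h
    rw [show ua + uc + ub = ua + ub + uc by ring, show va + vc + vb = va + vb + vc by ring] at h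
    linarith
  · -- (vc, ub) : assignment C swapped, x=ub y=vc z=ua
    have h := mixedC a b c ub vc ua ha hab hbc hub (by linarith) hvc (by linarith) hua (by linarith)
    rw [show c - vc = uc by linarith, show b - ub = vb by linarith,
        show a - ua = va by linarith] at h
    rw [show ub + uc + ua = ua + ub + uc by ring, show vb + vc + va = va + vb + vc by ring] at h
    linarith
  · -- diag c
    linarith

noncomputable def FF (x : ℝ) : ℝ := x * |x| / 2

lemma FF_zero : FF 0 = 0 := by simp [FF]
lemma FF_neg (x : ℝ) : FF (-x) = - FF x := by unfold FF; rw [abs_neg]; ring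
lemma FF_sq {x : ℝ} (h : 0 ≤ x) : FF x = x^2/2 := by unfold FF; rw [abs_of_nonneg h]; ring

lemma FF_mono : Monotone FF := by
  intro x y h
  unfold FF
  rcases le_or_gt 0 x with hx | hx
  · rw [abs_of_nonneg hx, abs_of_nonneg (le_trans hx h)]; nlinarith
  · rcases le_or_gt 0 y with hy | hy
    · rw [abs_of_neg hx, abs_of_nonneg hy]; nlinarith
    · rw [abs_of_neg hx, abs_of_neg hy]; nlinarith

lemma FF_deriv (x : ℝ) : HasDerivAt FF |x| x := by
  rcases lt_trichotomy x 0 with h | h | h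
  · have hd : HasDerivAt (fun y : ℝ => -(y^2)/2) (-x) x := by
      have := ((hasDerivAt_pow 2 x).neg.div_const 2)
      simpa using this.congr_deriv (by ring)
    have hev : (fun y : ℝ => -(y^2)/2) =ᶠ[nhds x] FF := by
      filter_upwards [Iio_mem_nhds h] with y hy
      unfold FF; rw [abs_of_neg hy]; ring
    have := hd.congr_of_eventuallyEq hev.symm
    rwa [abs_of_neg h]
  · subst h
    rw [hasDerivAt_iff_tendsto_slope]
    have ht : Filter.Tendsto (fun y : ℝ => |y|/2) (nhdsWithin 0 {(0:ℝ)}ᶜ) (nhds |(0:ℝ)|) := by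
      have h2 := (continuous_abs.tendsto (0:ℝ)).div_const 2
      simp only [abs_zero, zero_div] at h2 ⊢
      exact h2.mono_left nhdsWithin_le_nhds
    refine ht.congr' ?_
    filter_upwards [self_mem_nhdsWithin] with y hy
    have hy' : y ≠ 0 := hy
    rw [slope_def_field, FF_zero]
    unfold FF
    field_simp; ring
  · have hd : HasDerivAt (fun y : ℝ => (y^2)/2) x x := by
      have := ((hasDerivAt_pow 2 x).div_const 2)
      simpa using this.congr_deriv (by ring)
    have hev : (fun y : ℝ => (y^2)/2) =ᶠ[nhds x] FF := by
      filter_upwards [Ioi_mem_nhds h] with y hy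
      unfold FF; rw [abs_of_nonneg (le_of_lt hy)]; ring
    have := hd.congr_of_eventuallyEq hev.symm
    rwa [abs_of_pos h]

lemma integral_abs_eq (a b : ℝ) : (∫ x in a..b, |x|) = FF b - FF a :=
  intervalIntegral.integral_eq_sub_of_hasDerivAt (fun x _ => FF_deriv x)
    (continuous_abs.intervalIntegrable a b)

lemma sum_FF_le {k : ℕ} (p q : Fin k → ℝ)
    (hd : ∀ i j, i ≠ j → Set.Ioo (p i) (q i) ∩ Set.Ioo (p j) (q j) = ∅)
    (S : Finset (Fin k)) :
    ∀ (y x : ℝ), y ≤ x → (∀ j ∈ S, y ≤ p j ∧ p j < q j ∧ q j ≤ x) →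
      ∑ j ∈ S, (FF (q j) - FF (p j)) ≤ FF x - FF y := by
  induction S using Finset.strongInduction with
  | _ S ih =>
    intro y x hyx hS
    rcases S.eq_empty_or_nonempty with rfl | hne
    · simp [sub_nonneg.2 (FF_mono hyx)]
    · obtain ⟨j₀, hj₀, hmax⟩ := S.exists_max_image q hne
      have key : ∀ j ∈ S.erase j₀, q j ≤ p j₀ := by
        intro j hj
        by_contra hlt
        push_neg at hlt
        have hjne := Finset.ne_of_mem_erase hj
        have hjS := Finset.mem_of_mem_erase hj
        obtain ⟨_, hpq, hqx⟩ := hS j hjS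
        obtain ⟨_, hpq0, hqx0⟩ := hS j₀ hj₀
        set t := (max (p j) (p j₀) + q j)/2 with ht
        have h1 : max (p j) (p j₀) < q j := max_lt hpq hlt
        have h2 : p j < t := by
          have := le_max_left (p j) (p j₀); simp only [ht]; linarith
        have h3 : p j₀ < t := by
          have := le_max_right (p j) (p j₀); simp only [ht]; linarith
        have h4 : t < q j := by simp only [ht]; linarith
        have h5 : t < q j₀ := lt_of_lt_of_le h4 (hmax j hjS)
        have := hd j j₀ hjne
        rw [Set.eq_empty_iff_forall_notMem] at this
        exact this t ⟨⟨h2, h4⟩, ⟨h3, h5⟩⟩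
      obtain ⟨hyp0, hpq0, hqx0⟩ := hS j₀ hj₀
      have hsub := ih (S.erase j₀) (Finset.erase_ssubset hj₀) y (p j₀) hyp0
        (fun j hj => ⟨(hS j (Finset.mem_of_mem_erase hj)).1,
          (hS j (Finset.mem_of_mem_erase hj)).2.1, key j hj⟩)
      rw [← Finset.add_sum_erase S _ hj₀]
      have := FF_mono hqx0
      linarith

section Geometry
variable {n k : ℕ}

/-- median of lo, 0, hi -/
noncomputable def md (C : Config n k) (j : Fin k) : ℝ := max (C.lo j) (min (C.hi j) 0)

lemma md_le_hi (C : Config n k) (j : Fin k) : md C j ≤ C.hi j :=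
  max_le (le_of_lt (C.nondeg j)) (min_le_left _ _)

lemma lo_le_md (C : Config n k) (j : Fin k) : C.lo j ≤ md C j := le_max_left _ _

lemma md_nonneg (C : Config n k) {j : Fin k} (h : 0 < C.hi j) : 0 ≤ md C j := by
  unfold md; rw [min_eq_right (le_of_lt h)]; exact le_max_right _ _

lemma md_lt_hi (C : Config n k) {j : Fin k} (h : 0 < C.hi j) : md C j < C.hi j := by
  unfold md; exact max_lt (C.nondeg j) (lt_of_le_of_lt (min_le_right _ _) h)

lemma md_eq_hi (C : Config n k) {j : Fin k} (h : C.hi j ≤ 0) : md C j = C.hi j := by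
  unfold md; rw [min_eq_left h]; exact max_eq_right (le_of_lt (C.nondeg j))

lemma med_symm {lo hi : ℝ} (h : lo ≤ hi) : max lo (min hi 0) = min hi (max lo 0) := by
  rcases le_total lo 0 with h1 | h1 <;> rcases le_total hi 0 with h2 | h2
  · rw [min_eq_left h2, max_eq_right h, max_eq_right h1, min_eq_left h2]
  · rw [min_eq_right h2, max_eq_right h1, min_eq_right h2]
  · have hl : lo = 0 := le_antisymm (by linarith) h1
    have hh : hi = 0 := le_antisymm h2 (by linarith)
    simp [hl, hh]
  · rw [min_eq_right h2, max_eq_left h1, min_eq_right h]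

noncomputable def vpart (C : Config n k) (j : Fin k) : ℝ := FF (C.hi j) - FF (md C j)

noncomputable def rv (C : Config n k) (i : Fin n) : ℝ :=
  ∑ j ∈ univ.filter (fun j => C.lab j = i), vpart C j

lemma vpart_nonneg (C : Config n k) (j : Fin k) : 0 ≤ vpart C j :=
  sub_nonneg.2 (FF_mono (md_le_hi C j))

lemma rv_nonneg (C : Config n k) (i : Fin n) : 0 ≤ rv C i :=
  Finset.sum_nonneg fun j _ => vpart_nonneg C j

/-- reflection -/
noncomputable def reflC (C : Config n k) : Config n k where
  lo := fun j => -C.hi j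
  hi := fun j => -C.lo j
  lab := C.lab
  nondeg := fun j => by have := C.nondeg j; linarith
  disj := fun i j hij => by
    have h := C.disj i j hij
    rw [Set.eq_empty_iff_forall_notMem] at h ⊢
    rintro x ⟨⟨h1, h2⟩, ⟨h3, h4⟩⟩
    exact h (-x) ⟨⟨by linarith, by linarith⟩, ⟨by linarith, by linarith⟩⟩

lemma md_reflC (C : Config n k) (j : Fin k) : md (reflC C) j = - md C j := by
  show max (-C.hi j) (min (-C.lo j) 0) = - max (C.lo j) (min (C.hi j) 0)
  rw [med_symm (le_of_lt (C.nondeg j))]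
  have h1 : min (-C.lo j) 0 = -(max (C.lo j) 0) := by
    rcases le_total (C.lo j) 0 with h | h
    · rw [min_eq_right (by linarith), max_eq_right h, neg_zero]
    · rw [min_eq_left (by linarith), max_eq_left h]
  rw [h1, max_neg_neg]

lemma mass_split (C : Config n k) (i : Fin n) :
    C.mass i = rv C i + rv (reflC C) i := by
  unfold Config.mass rv
  have hlab : (univ.filter (fun j => (reflC C).lab j = i)) = (univ.filter (fun j => C.lab j = i)) := rfl
  rw [hlab, ← Finset.sum_add_distrib]
  refine Finset.sum_congr rfl fun j _ => ?_
  rw [integral_abs_eq]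
  show FF (C.hi j) - FF (C.lo j) =
    (FF (C.hi j) - FF (md C j)) + (FF (-(C.lo j)) - FF (md (reflC C) j))
  rw [md_reflC, FF_neg, FF_neg]
  ring

lemma mass_reflC (C : Config n k) (i : Fin n) : (reflC C).mass i = C.mass i := by
  unfold Config.mass
  refine Finset.sum_congr rfl fun j _ => ?_
  rw [integral_abs_eq, integral_abs_eq]
  show FF (-(C.lo j)) - FF (-(C.hi j)) = _
  rw [FF_neg, FF_neg]; ring

lemma endpointSet_reflC (C : Config n k) :
    (reflC C).endpointSet = C.endpointSet.image (fun x => -x) := by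
  show (image (fun j => -C.hi j) univ) ∪ (image (fun j => -C.lo j) univ) = _
  unfold Config.endpointSet
  rw [Finset.image_union, Finset.image_image, Finset.image_image, Finset.union_comm]
  rfl

lemma perim_reflC (C : Config n k) : (reflC C).perim = C.perim := by
  unfold Config.perim
  rw [endpointSet_reflC, Finset.sum_image (by intro a _ b _ h; simpa using h)]
  refine Finset.sum_congr rfl fun x _ => ?_
  simp

end Geometry

section RightBound
open scoped Classical
variable {k : ℕ}

noncomputable def Ji (C : Config 3 k) (i : Fin 3) : Finset (Fin k) :=
  univ.filter (fun j => C.lab j = i ∧ 0 < C.hi j)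

noncomputable def ep (C : Config 3 k) (i : Fin 3) : ℝ :=
  if h : (Ji C i).Nonempty then ((Ji C i).image C.hi).max' (h.image _) else 0

lemma ep_mem {C : Config 3 k} {i : Fin 3} (h : (Ji C i).Nonempty) :
    ∃ j, (C.lab j = i ∧ 0 < C.hi j) ∧ C.hi j = ep C i := by
  unfold ep; rw [dif_pos h]
  have hm := Finset.max'_mem ((Ji C i).image C.hi) (h.image _)
  rw [Finset.mem_image] at hm
  obtain ⟨j, hj, hje⟩ := hm
  exact ⟨j, by simpa [Ji] using hj, hje⟩

lemma le_ep {C : Config 3 k} {i : Fin 3} {j : Fin k}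
    (hlab : C.lab j = i) (hpos : 0 < C.hi j) : C.hi j ≤ ep C i := by
  have hmem : j ∈ Ji C i := by simp [Ji, hlab, hpos]
  unfold ep; rw [dif_pos ⟨j, hmem⟩]
  exact Finset.le_max' _ _ (Finset.mem_image_of_mem _ hmem)

lemma ep_nonneg (C : Config 3 k) (i : Fin 3) : 0 ≤ ep C i := by
  by_cases h : (Ji C i).Nonempty
  · obtain ⟨j, ⟨_, hpos⟩, hje⟩ := ep_mem h
    linarith
  · unfold ep; rw [dif_neg h]

lemma vpart_of_nonpos {C : Config 3 k} {j : Fin k} (h : C.hi j ≤ 0) : vpart C j = 0 := by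
  unfold vpart; rw [md_eq_hi C h, sub_self]

lemma rv_of_empty {C : Config 3 k} {i : Fin 3} (h : ¬ (Ji C i).Nonempty) : rv C i = 0 := by
  unfold rv
  refine Finset.sum_eq_zero fun j hj => ?_
  rw [Finset.mem_filter] at hj
  refine vpart_of_nonpos ?_
  by_contra hpos
  push_neg at hpos
  exact h ⟨j, by simp [Ji, hj.2, hpos]⟩

lemma sum_rv_le (C : Config 3 k) (T : Finset (Fin 3)) (x : ℝ) (hx : 0 ≤ x)
    (hT : ∀ j, C.lab j ∈ T → 0 < C.hi j → C.hi j ≤ x) :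
    2 * ∑ i ∈ T, rv C i ≤ x^2 := by
  have h1 : ∑ i ∈ T, rv C i = ∑ j ∈ univ.filter (fun j => C.lab j ∈ T), vpart C j := by
    unfold rv
    exact Finset.sum_fiberwise_eq_sum_filter univ T C.lab (vpart C)
  set S' : Finset (Fin k) := univ.filter (fun j => C.lab j ∈ T ∧ 0 < C.hi j) with hS'
  have h2 : ∑ j ∈ S', vpart C j = ∑ j ∈ univ.filter (fun j => C.lab j ∈ T), vpart C j := by
    refine Finset.sum_subset ?_ ?_
    · intro j hj; rw [Finset.mem_filter] at hj ⊢; exact ⟨hj.1, hj.2.1⟩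
    · intro j hj hnj
      rw [Finset.mem_filter] at hj
      rw [hS', Finset.mem_filter] at hnj
      push_neg at hnj
      exact vpart_of_nonpos (hnj (Finset.mem_univ j) hj.2)
  have hd : ∀ a b : Fin k, a ≠ b →
      Set.Ioo (md C a) (C.hi a) ∩ Set.Ioo (md C b) (C.hi b) = ∅ := by
    intro a b hab
    refine Set.subset_eq_empty ?_ (C.disj a b hab)
    exact Set.inter_subset_inter (Set.Ioo_subset_Ioo_left (lo_le_md C a))
      (Set.Ioo_subset_Ioo_left (lo_le_md C b))
  have h3 := sum_FF_le (md C) C.hi hd S' 0 x hx (fun j hj => by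
    rw [hS', Finset.mem_filter] at hj
    exact ⟨md_nonneg C hj.2.2, md_lt_hi C hj.2.2, hT j hj.2.1 hj.2.2⟩)
  have h4 : ∑ j ∈ S', (FF (C.hi j) - FF (md C j)) = ∑ j ∈ S', vpart C j := rfl
  rw [FF_zero, FF_sq hx] at h3
  rw [← h1] at *
  linarith [h3, h4.symm ▸ h3, h2]

lemma ep_inj {C : Config 3 k} {i i' : Fin 3} (hii : i ≠ i')
    (h : (Ji C i).Nonempty) (h' : (Ji C i').Nonempty) : ep C i ≠ ep C i' := by
  intro heq
  obtain ⟨j, ⟨hl, hp⟩, hje⟩ := ep_mem h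
  obtain ⟨j', ⟨hl', hp'⟩, hje'⟩ := ep_mem h'
  have hjj : j ≠ j' := fun hc => hii (hl ▸ hc ▸ hl')
  have hhi : C.hi j = C.hi j' := by rw [hje, hje', heq]
  have hd := C.disj j j' hjj
  rw [Set.eq_empty_iff_forall_notMem] at hd
  set t := (max (C.lo j) (C.lo j') + C.hi j)/2 with ht
  have h1 : C.lo j < C.hi j := C.nondeg j
  have h2 : C.lo j' < C.hi j' := C.nondeg j'
  have hmx : max (C.lo j) (C.lo j') < C.hi j := max_lt h1 (by linarith)
  have := le_max_left (C.lo j) (C.lo j')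
  have := le_max_right (C.lo j) (C.lo j')
  exact hd t ⟨⟨by simp only [ht]; linarith, by simp only [ht]; linarith⟩,
    ⟨by simp only [ht]; linarith, by simp only [ht]; linarith⟩⟩

lemma ep_sum_le (C : Config 3 k) :
    ep C 0 + ep C 1 + ep C 2 ≤ ∑ x ∈ C.endpointSet.filter (fun x => 0 < x), x := by
  classical
  set R : Finset (Fin 3) := univ.filter (fun i => (Ji C i).Nonempty) with hR
  have hsplit := Finset.sum_filter_add_sum_filter_not univ (fun i => (Ji C i).Nonempty) (ep C)
  have hz : ∑ i ∈ univ.filter (fun i => ¬ (Ji C i).Nonempty), ep C i = 0 := by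
    refine Finset.sum_eq_zero fun i hi => ?_
    rw [Finset.mem_filter] at hi
    unfold ep; rw [dif_neg hi.2]
  have h1 : ep C 0 + ep C 1 + ep C 2 = ∑ i ∈ R, ep C i := by
    rw [hR]
    have := Fin.sum_univ_three (ep C)
    linarith [hsplit, hz, this]
  rw [h1]
  have hinj : ∀ i ∈ R, ∀ i' ∈ R, ep C i = ep C i' → i = i' := by
    intro i hi i' hi' heq
    by_contra hne
    rw [hR, Finset.mem_filter] at hi hi'
    exact ep_inj hne hi.2 hi'.2 heq
  have him : ∑ x ∈ R.image (ep C), x = ∑ i ∈ R, ep C i :=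
    Finset.sum_image hinj
  rw [← him]
  refine Finset.sum_le_sum_of_subset_of_nonneg ?_ ?_
  · intro x hx
    rw [Finset.mem_image] at hx
    obtain ⟨i, hi, rfl⟩ := hx
    rw [hR, Finset.mem_filter] at hi
    obtain ⟨j, ⟨hl, hp⟩, hje⟩ := ep_mem hi.2
    rw [Finset.mem_filter]
    constructor
    · unfold Config.endpointSet
      exact Finset.mem_union_right _ (hje ▸ Finset.mem_image_of_mem C.hi (Finset.mem_univ j))
    · linarith
  · intro x hx _
    rw [Finset.mem_filter] at hx
    linarith [hx.2]

lemma right_bound (C : Config 3 k) :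
    (∀ i, 2 * rv C i ≤ (ep C i)^2) ∧
    (∃ i₀ : Fin 3, 2 * (rv C 0 + rv C 1 + rv C 2) ≤ (ep C i₀)^2) := by
  constructor
  · intro i
    by_cases h : (Ji C i).Nonempty
    · have := sum_rv_le C {i} (ep C i) (ep_nonneg C i) (fun j hj hp => by
        rw [Finset.mem_singleton] at hj
        exact le_ep hj hp)
      simpa using this
    · rw [rv_of_empty h]
      unfold ep; rw [dif_neg h]; norm_num
  · obtain ⟨i₀, hi₀⟩ := Finite.exists_max (ep C)
    refine ⟨i₀, ?_⟩
    have := sum_rv_le C univ (ep C i₀) (ep_nonneg C i₀) (fun j _ hp =>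
      le_trans (le_ep rfl hp) (hi₀ (C.lab j)))
    rwa [Fin.sum_univ_three] at this

end RightBound
-- new pieces
lemma sle {x E : ℝ} (hE : 0 ≤ E) (h : 2*x ≤ E^2) : sq2 x ≤ E := by
  have h1 : sq2 x ≤ Real.sqrt (E^2) := Real.sqrt_le_sqrt (by linarith)
  rwa [Real.sqrt_sq hE] at h1

lemma le_max3 (e : Fin 3 → ℝ) (i : Fin 3) : e i ≤ max (e 0) (max (e 1) (e 2)) := by
  fin_cases i
  · exact le_max_left _ _
  · exact le_trans (le_max_left _ _) (le_max_right _ _)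
  · exact le_trans (le_max_right _ _) (le_max_right _ _)

lemma side_bound (e0 e1 e2 w0 w1 w2 : ℝ)
    (he0 : 0 ≤ e0) (he1 : 0 ≤ e1) (he2 : 0 ≤ e2)
    (h0 : sq2 w0 ≤ e0) (h1 : sq2 w1 ≤ e1) (h2 : sq2 w2 ≤ e2)
    (hmax : sq2 (w0+w1+w2) ≤ max e0 (max e1 e2)) :
    sq2 (w0+w1+w2) + (sq2 w0 + sq2 w1 + sq2 w2 - max (sq2 w0) (max (sq2 w1) (sq2 w2)))
      ≤ e0 + e1 + e2 := by
  have m0 : sq2 w0 ≤ max (sq2 w0) (max (sq2 w1) (sq2 w2)) := le_max_left _ _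
  have m1 : sq2 w1 ≤ max (sq2 w0) (max (sq2 w1) (sq2 w2)) :=
    le_trans (le_max_left _ _) (le_max_right _ _)
  have m2 : sq2 w2 ≤ max (sq2 w0) (max (sq2 w1) (sq2 w2)) :=
    le_trans (le_max_right _ _) (le_max_right _ _)
  rcases max3_cases e0 e1 e2 with h | h | h <;> rw [h] at hmax
  · linarith
  · linarith
  · linarith

lemma perim_ge {n k : ℕ} (C : Config n k) :
    (∑ x ∈ C.endpointSet.filter (fun x => 0 < x), x)
      + (∑ x ∈ C.endpointSet.filter (fun x => x < 0), -x) ≤ C.perim := by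
  classical
  unfold Config.perim
  have hsplit := Finset.sum_filter_add_sum_filter_not C.endpointSet (fun x => 0 < x)
    (fun x => |x|)
  have h1 : ∑ x ∈ C.endpointSet.filter (fun x => 0 < x), |x|
      = ∑ x ∈ C.endpointSet.filter (fun x => 0 < x), x := by
    refine Finset.sum_congr rfl fun x hx => ?_
    rw [Finset.mem_filter] at hx
    exact abs_of_pos hx.2
  have h2 : ∑ x ∈ C.endpointSet.filter (fun x => x < 0), -x
      ≤ ∑ x ∈ C.endpointSet.filter (fun x => ¬ 0 < x), |x| := by
    have hsub : C.endpointSet.filter (fun x => x < 0) ⊆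
        C.endpointSet.filter (fun x => ¬ 0 < x) := by
      intro x hx
      rw [Finset.mem_filter] at hx ⊢
      exact ⟨hx.1, by linarith [hx.2]⟩
    calc ∑ x ∈ C.endpointSet.filter (fun x => x < 0), -x
        = ∑ x ∈ C.endpointSet.filter (fun x => x < 0), |x| := by
          refine Finset.sum_congr rfl fun x hx => ?_
          rw [Finset.mem_filter] at hx
          exact (abs_of_neg hx.2).symm
      _ ≤ _ := Finset.sum_le_sum_of_subset_of_nonneg hsub fun x _ _ => abs_nonneg x
  linarith
lemma left_sum_eq {n k : ℕ} (C : Config n k) :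
    ∑ x ∈ (reflC C).endpointSet.filter (fun x => 0 < x), x
      = ∑ x ∈ C.endpointSet.filter (fun x => x < 0), -x := by
  classical
  rw [endpointSet_reflC, Finset.filter_image]
  rw [Finset.sum_image (by intro a _ b _ h; simpa using h)]
  refine Finset.sum_congr ?_ (fun x _ => rfl)
  refine Finset.filter_congr fun x _ => ?_
  simp [neg_pos]

theorem part1 (M₁ M₂ M₃ : ℝ) (h₁ : 0 < M₁) (h12 : M₁ ≤ M₂) (h23 : M₂ ≤ M₃)
    (k : ℕ) (C : Config 3 k)
    (hσ : ∃ σ : Equiv.Perm (Fin 3), ∀ i, C.mass (σ i) = ![M₁, M₂, M₃] i) :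
    Real.sqrt (2 * M₂) + Real.sqrt (2 * M₁) + Real.sqrt (2 * (M₁ + M₃)) ≤ C.perim := by
  obtain ⟨σ, hσ⟩ := hσ
  set D := reflC C with hD
  have hm0 : C.mass (σ 0) = M₁ := hσ 0
  have hm1 : C.mass (σ 1) = M₂ := hσ 1
  have hm2 : C.mass (σ 2) = M₃ := hσ 2
  have hbase := base_sorted M₁ M₂ M₃
    (rv D (σ 0)) (rv D (σ 1)) (rv D (σ 2))
    (rv C (σ 0)) (rv C (σ 1)) (rv C (σ 2))
    (le_of_lt h₁) h12 h23
    (rv_nonneg D _) (rv_nonneg D _) (rv_nonneg D _)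
    (rv_nonneg C _) (rv_nonneg C _) (rv_nonneg C _)
    (by rw [← hm0, mass_split]; ring) (by rw [← hm1, mass_split]; ring)
    (by rw [← hm2, mass_split]; ring)
  -- permutation sums
  have hpermC : rv C (σ 0) + rv C (σ 1) + rv C (σ 2) = rv C 0 + rv C 1 + rv C 2 := by
    have h := Equiv.sum_comp σ (rv C)
    rw [Fin.sum_univ_three, Fin.sum_univ_three] at h
    exact h
  have hpermD : rv D (σ 0) + rv D (σ 1) + rv D (σ 2) = rv D 0 + rv D 1 + rv D 2 := by
    have h := Equiv.sum_comp σ (rv D)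
    rw [Fin.sum_univ_three, Fin.sum_univ_three] at h
    exact h
  have hpermEC : ep C (σ 0) + ep C (σ 1) + ep C (σ 2) = ep C 0 + ep C 1 + ep C 2 := by
    have h := Equiv.sum_comp σ (ep C)
    rw [Fin.sum_univ_three, Fin.sum_univ_three] at h
    exact h
  have hpermED : ep D (σ 0) + ep D (σ 1) + ep D (σ 2) = ep D 0 + ep D 1 + ep D 2 := by
    have h := Equiv.sum_comp σ (ep D)
    rw [Fin.sum_univ_three, Fin.sum_univ_three] at h
    exact h
  -- right side bound
  have hmaxC : sq2 (rv C (σ 0) + rv C (σ 1) + rv C (σ 2))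
      ≤ max (ep C (σ 0)) (max (ep C (σ 1)) (ep C (σ 2))) := by
    obtain ⟨i₀, hi₀⟩ := (right_bound C).2
    have h1 : sq2 (rv C (σ 0) + rv C (σ 1) + rv C (σ 2)) ≤ ep C i₀ := by
      rw [hpermC]; exact sle (ep_nonneg C i₀) hi₀
    have h2 := le_max3 (fun t => ep C (σ t)) (σ.symm i₀)
    simp only [Equiv.apply_symm_apply] at h2
    exact le_trans h1 h2
  have hmaxD : sq2 (rv D (σ 0) + rv D (σ 1) + rv D (σ 2))
      ≤ max (ep D (σ 0)) (max (ep D (σ 1)) (ep D (σ 2))) := by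
    obtain ⟨i₀, hi₀⟩ := (right_bound D).2
    have h1 : sq2 (rv D (σ 0) + rv D (σ 1) + rv D (σ 2)) ≤ ep D i₀ := by
      rw [hpermD]; exact sle (ep_nonneg D i₀) hi₀
    have h2 := le_max3 (fun t => ep D (σ t)) (σ.symm i₀)
    simp only [Equiv.apply_symm_apply] at h2
    exact le_trans h1 h2
  have hsideC := side_bound (ep C (σ 0)) (ep C (σ 1)) (ep C (σ 2))
    (rv C (σ 0)) (rv C (σ 1)) (rv C (σ 2))
    (ep_nonneg C _) (ep_nonneg C _) (ep_nonneg C _)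
    (sle (ep_nonneg C _) ((right_bound C).1 (σ 0)))
    (sle (ep_nonneg C _) ((right_bound C).1 (σ 1)))
    (sle (ep_nonneg C _) ((right_bound C).1 (σ 2))) hmaxC
  have hsideD := side_bound (ep D (σ 0)) (ep D (σ 1)) (ep D (σ 2))
    (rv D (σ 0)) (rv D (σ 1)) (rv D (σ 2))
    (ep_nonneg D _) (ep_nonneg D _) (ep_nonneg D _)
    (sle (ep_nonneg D _) ((right_bound D).1 (σ 0)))
    (sle (ep_nonneg D _) ((right_bound D).1 (σ 1)))
    (sle (ep_nonneg D _) ((right_bound D).1 (σ 2))) hmaxD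
  have hepC := ep_sum_le C
  have hepD := ep_sum_le D
  have hleft := left_sum_eq C
  have hper := perim_ge C
  show sq2 M₂ + sq2 M₁ + sq2 (M₁ + M₃) ≤ C.perim
  
  linarith [hbase, hsideC, hsideD, hpermEC, hpermED]

theorem part2 (M₁ M₂ M₃ : ℝ) (h₁ : 0 < M₁) (h12 : M₁ ≤ M₂) (h23 : M₂ ≤ M₃) :
    (∃ C : Config 3 3,
      C.lo 0 = -Real.sqrt (2 * M₂) ∧ C.hi 0 = 0 ∧ C.lab 0 = 1 ∧
      C.lo 1 = 0 ∧ C.hi 1 = Real.sqrt (2 * M₁) ∧ C.lab 1 = 0 ∧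
      C.lo 2 = Real.sqrt (2 * M₁) ∧ C.hi 2 = Real.sqrt (2 * (M₁ + M₃)) ∧ C.lab 2 = 2 ∧
      C.mass 0 = M₁ ∧ C.mass 1 = M₂ ∧ C.mass 2 = M₃ ∧
      C.perim = Real.sqrt (2 * M₂) + Real.sqrt (2 * M₁) +
        Real.sqrt (2 * (M₁ + M₃))) := by
  set s1 := Real.sqrt (2 * M₁) with hs1
  set s2 := Real.sqrt (2 * M₂) with hs2
  set s3 := Real.sqrt (2 * (M₁ + M₃)) with hs3
  have hM2 : (0:ℝ) < M₂ := lt_of_lt_of_le h₁ h12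
  have hM3 : (0:ℝ) < M₃ := lt_of_lt_of_le hM2 h23
  have hs1p : 0 < s1 := Real.sqrt_pos.2 (by linarith)
  have hs2p : 0 < s2 := Real.sqrt_pos.2 (by linarith)
  have hs3p : 0 < s3 := Real.sqrt_pos.2 (by linarith)
  have hs1sq : s1^2 = 2*M₁ := Real.sq_sqrt (by linarith)
  have hs2sq : s2^2 = 2*M₂ := Real.sq_sqrt (by linarith)
  have hs3sq : s3^2 = 2*(M₁+M₃) := Real.sq_sqrt (by linarith)
  have hs13 : s1 < s3 := by
    rw [hs1, hs3]
    exact Real.sqrt_lt_sqrt (by linarith) (by linarith)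
  refine ⟨⟨![-s2, 0, s1], ![0, s1, s3], ![1, 0, 2], ?_, ?_⟩, ?_⟩
  · intro j
    fin_cases j <;> first
      | (simp; linarith)
      | linarith
  · intro i j hij
    rw [Set.eq_empty_iff_forall_notMem]
    rintro x ⟨hx1, hx2⟩
    rw [Set.mem_Ioo] at hx1 hx2
    fin_cases i <;> fin_cases j <;>
      first
        | exact hij rfl
        | (simp at hx1 hx2; linarith [hs1p.le, hx1.1, hx1.2, hx2.1, hx2.2])
  · have hF1 : FF s1 = M₁ := by rw [FF_sq hs1p.le, hs1sq]; ring
    have hF2 : FF s2 = M₂ := by rw [FF_sq hs2p.le, hs2sq]; ring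
    have hF3 : FF s3 = M₁ + M₃ := by rw [FF_sq hs3p.le, hs3sq]; ring
    have hFm2 : FF (-s2) = -M₂ := by rw [FF_neg, hF2]
    refine ⟨rfl, rfl, rfl, rfl, rfl, rfl, rfl, rfl, rfl, ?_, ?_, ?_, ?_⟩
    · show (∑ j ∈ univ.filter (fun j => (![1,0,2] : Fin 3 → Fin 3) j = 0),
        ∫ x in (![-s2,0,s1] : Fin 3 → ℝ) j..(![0,s1,s3] : Fin 3 → ℝ) j, |x|) = M₁
      rw [Finset.sum_filter, Fin.sum_univ_three]
      simp [integral_abs_eq, hF1, hF2, hF3, hFm2, FF_zero]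
    · show (∑ j ∈ univ.filter (fun j => (![1,0,2] : Fin 3 → Fin 3) j = 1),
        ∫ x in (![-s2,0,s1] : Fin 3 → ℝ) j..(![0,s1,s3] : Fin 3 → ℝ) j, |x|) = M₂
      rw [Finset.sum_filter, Fin.sum_univ_three]
      simp [integral_abs_eq, hF1, hF2, hF3, hFm2, FF_zero]
    · show (∑ j ∈ univ.filter (fun j => (![1,0,2] : Fin 3 → Fin 3) j = 2),
        ∫ x in (![-s2,0,s1] : Fin 3 → ℝ) j..(![0,s1,s3] : Fin 3 → ℝ) j, |x|) = M₃
      rw [Finset.sum_filter, Fin.sum_univ_three]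
      simp [integral_abs_eq, hF1, hF2, hF3, hFm2, FF_zero]
    · show (∑ x ∈ (image (![-s2,0,s1] : Fin 3 → ℝ) univ ∪ image (![0,s1,s3] : Fin 3 → ℝ) univ), |x|)
        = s2 + s1 + s3
      have hset : (image (![-s2,0,s1] : Fin 3 → ℝ) univ ∪ image (![0,s1,s3] : Fin 3 → ℝ) univ)
          = {-s2, 0, s1, s3} := by
        have h1 : (univ : Finset (Fin 3)) = {0, 1, 2} := by decide
        rw [h1]
        simp only [Finset.image_insert, Finset.image_singleton,
          Matrix.cons_val_zero, Matrix.cons_val_one, Matrix.head_cons,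
          Matrix.cons_val_two, Matrix.tail_cons]
        ext x
        simp only [Finset.mem_union, Finset.mem_insert, Finset.mem_singleton]
        tauto
      rw [hset]
      have hn1 : (-s2 : ℝ) ∉ ({0, s1, s3} : Finset ℝ) := by
        simp only [Finset.mem_insert, Finset.mem_singleton]
        push_neg
        refine ⟨by linarith, by linarith, by linarith⟩
      have hn2 : (0 : ℝ) ∉ ({s1, s3} : Finset ℝ) := by
        simp only [Finset.mem_insert, Finset.mem_singleton]
        push_neg
        exact ⟨by linarith, by linarith⟩
      have hn3 : (s1 : ℝ) ∉ ({s3} : Finset ℝ) := by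
        simp only [Finset.mem_singleton]
        linarith
      rw [show ({-s2, 0, s1, s3} : Finset ℝ) = insert (-s2) ({0, s1, s3} : Finset ℝ) from rfl,
        Finset.sum_insert hn1,
        show ({0, s1, s3} : Finset ℝ) = insert (0:ℝ) ({s1, s3} : Finset ℝ) from rfl,
        Finset.sum_insert hn2,
        show ({s1, s3} : Finset ℝ) = insert s1 ({s3} : Finset ℝ) from rfl,
        Finset.sum_insert hn3, Finset.sum_singleton]
      rw [abs_neg, abs_of_pos hs2p, abs_zero, abs_of_pos hs1p, abs_of_pos hs3p]
      ring

end TripleBubbleAux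
/-- Triple bubble with density `|x|`: every configuration of three regions of weighted
masses `0 < M₁ ≤ M₂ ≤ M₃` has total weighted perimeter at least
`√(2M₂) + √(2M₁) + √(2(M₁+M₃))`, and the configuration consisting of `[-√(2M₂), 0]`
(mass `M₂`), `[0, √(2M₁)]` (mass `M₁`), and `[√(2M₁), √(2(M₁+M₃))]` (mass `M₃`)
achieves this bound with exactly these masses. -/
theorem triple_bubble (M₁ M₂ M₃ : ℝ) (h₁ : 0 < M₁) (h12 : M₁ ≤ M₂) (h23 : M₂ ≤ M₃) :
    (∀ (k : ℕ) (C : Config 3 k),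
      (∃ σ : Equiv.Perm (Fin 3), ∀ i, C.mass (σ i) = ![M₁, M₂, M₃] i) →
      Real.sqrt (2 * M₂) + Real.sqrt (2 * M₁) + Real.sqrt (2 * (M₁ + M₃)) ≤ C.perim) ∧
    (∃ C : Config 3 3,
      C.lo 0 = -Real.sqrt (2 * M₂) ∧ C.hi 0 = 0 ∧ C.lab 0 = 1 ∧
      C.lo 1 = 0 ∧ C.hi 1 = Real.sqrt (2 * M₁) ∧ C.lab 1 = 0 ∧
      C.lo 2 = Real.sqrt (2 * M₁) ∧ C.hi 2 = Real.sqrt (2 * (M₁ + M₃)) ∧ C.lab 2 = 2 ∧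
      C.mass 0 = M₁ ∧ C.mass 1 = M₂ ∧ C.mass 2 = M₃ ∧
      C.perim = Real.sqrt (2 * M₂) + Real.sqrt (2 * M₁) +
        Real.sqrt (2 * (M₁ + M₃))) := by
  exact ⟨fun k C h => part1 M₁ M₂ M₃ h₁ h12 h23 k C h, part2 M₁ M₂ M₃ h₁ h12 h23⟩
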